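/- For a real parameter a ∈ (2, ∞), the critical point c₋(a) = (-a - √(a²-3))/3 of f_a escapes to infinity under iteration of f_a, so real parameters a > 2 lie outside the connectedness locus. -/
import Mathlib


/-- For a real parameter `a > 2`, the critical point `c₋(a) = (-a - √(a²-3))/3`
of `f_a(x) = x^3 + a x^2 + x` escapes to infinity under iteration. -/
theorem stmt18 (a : ℝ) (ha : 2 < a) :
    Filter.Tendsto
      (fun n : ℕ =>
        |(fun x : ℝ => x ^ 3 + a * x ^ 2 + x)^[n]
          ((-a - Real.sqrt (a ^ 2 - 3)) / 3)|)
      Filter.atTop Filter.atTop := by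
  set f : ℝ → ℝ := fun x => x ^ 3 + a * x ^ 2 + x with hf
  set s := Real.sqrt (a ^ 2 - 3) with hsdef
  have hs2 : s ^ 2 = a ^ 2 - 3 := Real.sq_sqrt (by nlinarith)
  have hsnn : 0 ≤ s := Real.sqrt_nonneg _
  have hs1 : 1 < s := by nlinarith
  have hsa : s < a := by nlinarith
  set c := (-a - s) / 3 with hc
  set v := f c with hv
  have hveq : v = (a + s) * (a ^ 2 + a * s - 6) / 27 := by
    rw [hv, hf]; simp only; rw [hc]
    linear_combination (-(a + s) / 27) * hs2
  have hv0 : 0 < v := by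
    rw [hveq]; nlinarith
  have hstep : ∀ x : ℝ, v ≤ x → x + v ^ 3 ≤ f x := by
    intro x hx
    have h1 : v ^ 3 ≤ x ^ 3 := pow_le_pow_left₀ hv0.le hx 3
    have h2 : 0 ≤ a * x ^ 2 := by positivity
    simp only [hf]; nlinarith
  have hiter : ∀ n : ℕ, v + n * v ^ 3 ≤ f^[n] v := by
    intro n
    induction n with
    | zero => simp
    | succ n ih =>
      have hx : v ≤ f^[n] v := by
        have : 0 ≤ (n : ℝ) * v ^ 3 := by positivity
        linarith
      have := hstep _ hx
      rw [Function.iterate_succ_apply']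
      push_cast
      nlinarith
  have base : Filter.Tendsto (fun n : ℕ => v + n * v ^ 3) Filter.atTop Filter.atTop := by
    apply Filter.tendsto_atTop_add_const_left
    exact tendsto_natCast_atTop_atTop.atTop_mul_const (by positivity)
  have key : Filter.Tendsto (fun n : ℕ => |f^[n + 1] c|) Filter.atTop Filter.atTop := by
    apply Filter.tendsto_atTop_mono _ base
    intro n
    calc v + n * v ^ 3 ≤ f^[n] v := hiter n
    _ ≤ |f^[n] v| := le_abs_self _
    _ = |f^[n + 1] c| := by rw [Function.iterate_succ_apply, ← hv]
  exact (Filter.tendsto_add_atTop_iff_nat 1).mp key
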